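/- For pure λ-terms, strong normalisation in λpar and λsub coincide: t is λpar-strongly normalising if and only if t is λsub-strongly normalising. -/

import Mathlib

/-! # Λ-terms with explicit substitutions (λsub calculus) -/

inductive Tm : Type
  | var : ℕ → Tm
  | app : Tm → Tm → Tm
  | lam : ℕ → Tm → Tm
  | esub : ℕ → Tm → Tm → Tm   -- esub x t u  is  t[x/u]
  deriving DecidableEq

namespace Tm

/-- free variables -/
def fv : Tm → Finset ℕ
  | var x => {x}
  | app t u => fv t ∪ fv u
  | lam x t => fv t \ {x}
  | esub x t u => (fv t \ {x}) ∪ fv u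

/-- implicit (capture-avoiding, under the bound-variable convention) substitution -/
def subst (x : ℕ) (v : Tm) : Tm → Tm
  | var y => if y = x then v else var y
  | app t u => app (subst x v t) (subst x v u)
  | lam y t => lam y (subst x v t)
  | esub y t u => esub y (subst x v t) (subst x v u)

/-- `Repl x u t t'` : `t'` is obtained from `t` by replacing exactly one free
occurrence of `x` by `u`, without capture of `x` or the free variables of `u`. -/
inductive Repl (x : ℕ) (u : Tm) : Tm → Tm → Prop
  | var : Repl x u (var x) u
  | appL {t t' s} : Repl x u t t' → Repl x u (app t s) (app t' s)
  | appR {t s s'} : Repl x u s s' → Repl x u (app t s) (app t s')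
  | lam {y t t'} : y ≠ x → y ∉ fv u → Repl x u t t' → Repl x u (lam y t) (lam y t')
  | esubL {y t t' s} : y ≠ x → y ∉ fv u → Repl x u t t' → Repl x u (esub y t s) (esub y t' s)
  | esubR {y t s s'} : Repl x u s s' → Repl x u (esub y t s) (esub y t s')

/-- root reduction rules of λsub: B, Gc, R -/
inductive LsubRoot : Tm → Tm → Prop
  | B {x t u} : LsubRoot (app (lam x t) u) (esub x t u)
  | Gc {x t u} : x ∉ fv t → LsubRoot (esub x t u) t
  | R {x t t' u} : Repl x u t t' → LsubRoot (esub x t u) (esub x t' u)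

/-- root rules of the substitution subcalculus: Gc, R -/
inductive SubRoot : Tm → Tm → Prop
  | Gc {x t u} : x ∉ fv t → SubRoot (esub x t u) t
  | R {x t t' u} : Repl x u t t' → SubRoot (esub x t u) (esub x t' u)

/-- root rule B only -/
inductive BRoot : Tm → Tm → Prop
  | B {x t u} : BRoot (app (lam x t) u) (esub x t u)

/-- root β-rule (full implicit substitution) -/
inductive BetaRoot : Tm → Tm → Prop
  | beta {x t u} : BetaRoot (app (lam x t) u) (subst x u t)

/-- root rules of the partial λpar-calculus: β_p and BGc -/
inductive LparRoot : Tm → Tm → Prop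
  | betaP {x t t' u} : Repl x u t t' → LparRoot (app (lam x t) u) (app (lam x t') u)
  | BGc {x t u} : x ∉ fv t → LparRoot (app (lam x t) u) t

/-- closure of a root relation under all contexts -/
inductive Ctx (r : Tm → Tm → Prop) : Tm → Tm → Prop
  | root {t t'} : r t t' → Ctx r t t'
  | appL {t t' s} : Ctx r t t' → Ctx r (app t s) (app t' s)
  | appR {t s s'} : Ctx r s s' → Ctx r (app t s) (app t s')
  | lam {y t t'} : Ctx r t t' → Ctx r (lam y t) (lam y t')
  | esubL {y t t' s} : Ctx r t t' → Ctx r (esub y t s) (esub y t' s)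
  | esubR {y t s s'} : Ctx r s s' → Ctx r (esub y t s) (esub y t s')

def LsubStep : Tm → Tm → Prop := Ctx LsubRoot
def SubStep : Tm → Tm → Prop := Ctx SubRoot
def BStep : Tm → Tm → Prop := Ctx BRoot
def BetaStep : Tm → Tm → Prop := Ctx BetaRoot
def LparStep : Tm → Tm → Prop := Ctx LparRoot
/-- λdef: λsub rules together with full β -/
def LdefStep : Tm → Tm → Prop := Ctx (fun a b => LsubRoot a b ∨ BetaRoot a b)

/-- pure λ-terms: no explicit substitution -/
def IsPure : Tm → Prop
  | var _ => True
  | app t u => IsPure t ∧ IsPure u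
  | lam _ t => IsPure t
  | esub _ _ _ => False

/-- strong normalisation of `t` for the relation `r` -/
def SN (r : Tm → Tm → Prop) (t : Tm) : Prop := Acc (fun a b => r b a) t

/-- translation ° from λ-terms to Λ-terms -/
def parlm : Tm → Tm
  | var x => var x
  | lam x t => lam x (parlm t)
  | esub x t u => esub x (parlm t) (parlm u)
  | app (lam x v) u => esub x (parlm v) (parlm u)
  | app (var x) u => app (var x) (parlm u)
  | app (app a b) u => app (parlm (app a b)) (parlm u)
  | app (esub y a b) u => app (parlm (esub y a b)) (parlm u)

/-- unfolding ⌊·⌋ from Λ-terms to λ-terms -/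
def unf : Tm → Tm
  | var x => var x
  | app t u => app (unf t) (unf u)
  | lam x t => lam x (unf t)
  | esub x t u => app (lam x (unf t)) (unf u)

end Tm

/-! # Λ-metaterms -/

inductive MTm : Type
  | var : ℕ → MTm
  | mvar : Finset ℕ → MTm
  | app : MTm → MTm → MTm
  | lam : ℕ → MTm → MTm
  | esub : ℕ → MTm → MTm → MTm

namespace MTm

def fv : MTm → Finset ℕ
  | var x => {x}
  | mvar Δ => Δ
  | app t u => fv t ∪ fv u
  | lam x t => fv t \ {x}
  | esub x t u => (fv t \ {x}) ∪ fv u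

/-- replacement of exactly one free occurrence of the variable x by u -/
inductive MRepl (x : ℕ) (u : MTm) : MTm → MTm → Prop
  | var : MRepl x u (var x) u
  | appL {t t' s} : MRepl x u t t' → MRepl x u (app t s) (app t' s)
  | appR {t s s'} : MRepl x u s s' → MRepl x u (app t s) (app t s')
  | lam {y t t'} : y ≠ x → y ∉ fv u → MRepl x u t t' → MRepl x u (lam y t) (lam y t')
  | esubL {y t t' s} : y ≠ x → y ∉ fv u → MRepl x u t t' → MRepl x u (esub y t s) (esub y t' s)
  | esubR {y t s s'} : MRepl x u s s' → MRepl x u (esub y t s) (esub y t s')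

/-- `MReplX x Δ u b t t'` : `t'` is obtained from `t` by replacing one occurrence of the
metavariable `X_Δ` by `X_Δ[x/u]`, at a position which is *not* on the left spine of
substitutions starting from the attached substitution (flag `b = true` means the current
position is still on that spine, where attaching is forbidden). -/
inductive MReplX (x : ℕ) (Δ : Finset ℕ) (u : MTm) : Bool → MTm → MTm → Prop
  | mvar : MReplX x Δ u false (mvar Δ) (esub x (mvar Δ) u)
  | appL {b t t' s} : MReplX x Δ u false t t' → MReplX x Δ u b (app t s) (app t' s)
  | appR {b t s s'} : MReplX x Δ u false s s' → MReplX x Δ u b (app t s) (app t s')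
  | lam {b y t t'} : y ≠ x → y ∉ fv u → MReplX x Δ u false t t' →
      MReplX x Δ u b (lam y t) (lam y t')
  | esubL {b y t t' s} : y ≠ x → y ∉ fv u → MReplX x Δ u b t t' →
      MReplX x Δ u b (esub y t s) (esub y t' s)
  | esubR {b y t s s'} : MReplX x Δ u false s s' → MReplX x Δ u b (esub y t s) (esub y t s')

/-- root rules of the substitution calculus `sub` on metaterms: Gc, R, R_X -/
inductive MSubRoot : MTm → MTm → Prop
  | Gc {x t u} : x ∉ fv t → MSubRoot (esub x t u) t
  | R {x t t' u} : MRepl x u t t' → MSubRoot (esub x t u) (esub x t' u)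
  | RX {x Δ t t' u} : x ∈ Δ → MReplX x Δ u true t t' → MSubRoot (esub x t u) (esub x t' u)

inductive MCtx (r : MTm → MTm → Prop) : MTm → MTm → Prop
  | root {t t'} : r t t' → MCtx r t t'
  | appL {t t' s} : MCtx r t t' → MCtx r (app t s) (app t' s)
  | appR {t s s'} : MCtx r s s' → MCtx r (app t s) (app t s')
  | lam {y t t'} : MCtx r t t' → MCtx r (lam y t) (lam y t')
  | esubL {y t t' s} : MCtx r t t' → MCtx r (esub y t s) (esub y t' s)
  | esubR {y t s s'} : MCtx r s s' → MCtx r (esub y t s) (esub y t s')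

/-- one-step sub-reduction on metaterms -/
def MSubStep : MTm → MTm → Prop := MCtx MSubRoot

/-- the commutation equivalence =_C of independent substitutions -/
inductive MCEq : MTm → MTm → Prop
  | comm {x y t u v} : x ≠ y → y ∉ fv u → x ∉ fv v →
      MCEq (esub y (esub x t u) v) (esub x (esub y t v) u)
  | refl (t) : MCEq t t
  | symm {t t'} : MCEq t t' → MCEq t' t
  | trans {t t' t''} : MCEq t t' → MCEq t' t'' → MCEq t t''
  | appL {t t' s} : MCEq t t' → MCEq (app t s) (app t' s)
  | appR {t s s'} : MCEq s s' → MCEq (app t s) (app t s')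
  | lam {y t t'} : MCEq t t' → MCEq (lam y t) (lam y t')
  | esubL {y t t' s} : MCEq t t' → MCEq (esub y t s) (esub y t' s)
  | esubR {y t s s'} : MCEq s s' → MCEq (esub y t s) (esub y t s')

/-- `spineMem y t = true` iff `t` is of the form `X_Δ[x₁/u₁]…[xₙ/uₙ]` with `y ∈ Δ`. -/
def spineMem (y : ℕ) : MTm → Bool
  | mvar Δ => decide (y ∈ Δ)
  | esub _ t _ => spineMem y t
  | _ => false

/-- the occurrence-counting measure m -/
def m : MTm → ℕ → ℕ
  | var y, x => if y = x then 1 else 0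
  | mvar Δ, x => if x ∈ Δ then 1 else 0
  | app t u, x => m t x + m u x
  | lam _ t, x => m t x
  | esub y t u, x =>
      if spineMem y t then m t x + m t y * m u x
      else m t x + m u x + m t y * m u x

/-- the size measure s -/
def s : MTm → ℕ
  | var _ => 1
  | mvar Δ => Δ.card
  | app t u => s t + s u
  | lam _ t => s t
  | esub x t u =>
      if spineMem x t then s t - 1 + m t x * s u
      else s t + s u + m t x * s u

/-- implicit (capture-avoiding) substitution on metaterms; on a metavariable containing
`x` it attaches an explicit substitution -/
def msubst (x : ℕ) (v : MTm) : MTm → MTm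
  | var y => if y = x then v else var y
  | mvar Δ => if x ∈ Δ then esub x (mvar Δ) v else mvar Δ
  | app t u => app (msubst x v t) (msubst x v u)
  | lam y t => lam y (msubst x v t)
  | esub y t u => esub y (msubst x v t) (msubst x v u)

/-- normal form for a relation -/
def NF (r : MTm → MTm → Prop) (t : MTm) : Prop := ∀ u, ¬ r t u

end MTm

/-! # Types -/

inductive Ty : Type
  | base : ℕ → Ty
  | arrow : Ty → Ty → Ty
  | inter : Ty → Ty → Ty
  deriving DecidableEq

namespace Ty

/-- the preorder ≪ on intersection types -/
inductive Le : Ty → Ty → Prop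
  | refl (A) : Le A A
  | interL {A B} : Le (inter A B) A
  | interR {A B} : Le (inter A B) B
  | trans {A B C} : Le A B → Le B C → Le A C
  | pair {A B C} : Le A B → Le A C → Le A (inter B C)

/-- a type which is not an intersection -/
def IsInterFree : Ty → Prop
  | inter _ _ => False
  | _ => True

/-- A₁ ∩ … ∩ Aₙ -/
def bigInter (A : Ty) (l : List Ty) : Ty := l.foldl inter A

end Ty

abbrev Env := ℕ → Option Ty

/-- environment update Γ, x:A -/
def Env.upd (Γ : Env) (x : ℕ) (A : Ty) : Env := fun y => if y = x then some A else Γ y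

/-- the additive intersection type system add^i for Λ-terms -/
inductive Der : Env → Tm → Ty → Prop
  | ax {Γ x A} : Γ x = some A → Der Γ (Tm.var x) A
  | app {Γ t u A B} : Der Γ t (Ty.arrow A B) → Der Γ u A → Der Γ (Tm.app t u) B
  | abs {Γ x t A B} : Der (Γ.upd x A) t B → Der Γ (Tm.lam x t) (Ty.arrow A B)
  | subs {Γ x t u A B} : Der Γ u B → Der (Γ.upd x B) t A → Der Γ (Tm.esub x t u) A
  | interI {Γ t A B} : Der Γ t A → Der Γ t B → Der Γ t (Ty.inter A B)
  | interE1 {Γ t A B} : Der Γ t (Ty.inter A B) → Der Γ t A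
  | interE2 {Γ t A B} : Der Γ t (Ty.inter A B) → Der Γ t B

/-! # Simple types -/

inductive STy : Type
  | base : ℕ → STy
  | arrow : STy → STy → STy
  deriving DecidableEq

abbrev SEnv := ℕ → Option STy

def SEnv.upd (Γ : SEnv) (x : ℕ) (A : STy) : SEnv := fun y => if y = x then some A else Γ y

/-- the additive simple type system for λ-terms -/
inductive SDer : SEnv → Tm → STy → Prop
  | ax {Γ x A} : Γ x = some A → SDer Γ (Tm.var x) A
  | app {Γ t u A B} : SDer Γ t (STy.arrow A B) → SDer Γ u A → SDer Γ (Tm.app t u) B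
  | abs {Γ x t A B} : SDer (Γ.upd x A) t B → SDer Γ (Tm.lam x t) (STy.arrow A B)

/-! # Auxiliary development for Statement 9 -/

namespace Tm

open Relation

lemma ctx_mono {r r' : Tm → Tm → Prop} (h : ∀ a b, r a b → r' a b) :
    ∀ {a b}, Ctx r a b → Ctx r' a b := by
  intro a b hab
  induction hab with
  | root h' => exact Ctx.root (h _ _ h')
  | appL _ ih => exact Ctx.appL ih
  | appR _ ih => exact Ctx.appR ih
  | lam _ ih => exact Ctx.lam ih
  | esubL _ ih => exact Ctx.esubL ih
  | esubR _ ih => exact Ctx.esubR ih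

lemma bstep_lsub {a b : Tm} (h : BStep a b) : LsubStep a b :=
  ctx_mono (fun _ _ h' => by cases h'; exact LsubRoot.B) h

lemma lsub_cases {a b : Tm} (h : LsubStep a b) : BStep a b ∨ SubStep a b := by
  induction h with
  | root h' =>
    cases h' with
    | B => exact Or.inl (Ctx.root BRoot.B)
    | Gc hx => exact Or.inr (Ctx.root (SubRoot.Gc hx))
    | R hr => exact Or.inr (Ctx.root (SubRoot.R hr))
  | appL _ ih => exact ih.imp Ctx.appL Ctx.appL
  | appR _ ih => exact ih.imp Ctx.appR Ctx.appR
  | lam _ ih => exact ih.imp Ctx.lam Ctx.lam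
  | esubL _ ih => exact ih.imp Ctx.esubL Ctx.esubL
  | esubR _ ih => exact ih.imp Ctx.esubR Ctx.esubR

/-- number of application nodes -/
def appCount : Tm → ℕ
  | var _ => 0
  | app t u => appCount t + appCount u + 1
  | lam _ t => appCount t
  | esub _ t u => appCount t + appCount u

lemma bstep_appCount {a b : Tm} (h : BStep a b) : appCount b < appCount a := by
  induction h with
  | root r => cases r with | B => simp [appCount]
  | appL _ ih => simp only [appCount]; omega
  | appR _ ih => simp only [appCount]; omega
  | lam _ ih => simpa [appCount] using ih
  | esubL _ ih => simp only [appCount]; omega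
  | esubR _ ih => simp only [appCount]; omega

lemma fv_unf (t : Tm) : fv (unf t) = fv t := by
  induction t with
  | var x => rfl
  | app t u iht ihu => simp [unf, fv, iht, ihu]
  | lam x t iht => simp [unf, fv, iht]
  | esub x t u iht ihu => simp [unf, fv, iht, ihu]

lemma unf_repl {x : ℕ} {u t t' : Tm} (h : Repl x u t t') :
    Repl x (unf u) (unf t) (unf t') := by
  induction h with
  | var => exact Repl.var
  | appL _ ih => exact Repl.appL ih
  | appR _ ih => exact Repl.appR ih
  | lam hy hyu _ ih => exact Repl.lam hy (by rwa [fv_unf]) ih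
  | esubL hy hyu _ ih => exact Repl.appL (Repl.lam hy (by rwa [fv_unf]) ih)
  | esubR _ ih => exact Repl.appR ih

lemma unf_bstep {a b : Tm} (h : BStep a b) : unf a = unf b := by
  induction h with
  | root r => cases r with | B => rfl
  | appL _ ih => simp [unf, ih]
  | appR _ ih => simp [unf, ih]
  | lam _ ih => simp [unf, ih]
  | esubL _ ih => simp [unf, ih]
  | esubR _ ih => simp [unf, ih]

lemma unf_substep {a b : Tm} (h : SubStep a b) : LparStep (unf a) (unf b) := by
  induction h with
  | root r =>
    cases r with
    | Gc hx => exact Ctx.root (LparRoot.BGc (by rwa [fv_unf]))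
    | R hr => exact Ctx.root (LparRoot.betaP (unf_repl hr))
  | appL _ ih => exact Ctx.appL ih
  | appR _ ih => exact Ctx.appR ih
  | lam _ ih => exact Ctx.lam ih
  | esubL _ ih => exact Ctx.appL (Ctx.lam ih)
  | esubR _ ih => exact Ctx.appR ih

lemma unf_pure : ∀ {t : Tm}, IsPure t → unf t = t := by
  intro t
  induction t with
  | var x => intro _; rfl
  | app t u iht ihu => intro ht; simp [unf, iht ht.1, ihu ht.2]
  | lam x t iht => intro ht; simp [unf, iht ht]
  | esub x t u _ _ => intro ht; exact ht.elim

lemma pure_repl {x : ℕ} {u t t' : Tm} (ht : IsPure t) (hu : IsPure u)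
    (h : Repl x u t t') : IsPure t' := by
  induction h with
  | var => exact hu
  | appL _ ih => exact ⟨ih ht.1, ht.2⟩
  | appR _ ih => exact ⟨ht.1, ih ht.2⟩
  | lam _ _ _ ih => exact ih ht
  | esubL _ _ _ _ => exact ht.elim
  | esubR _ _ => exact ht.elim

lemma pure_lpar {t t' : Tm} (ht : IsPure t) (h : LparStep t t') : IsPure t' := by
  induction h with
  | root r =>
    cases r with
    | @betaP x a a' u hr =>
      have ha : IsPure a := ht.1
      have ha' : IsPure a' := pure_repl ha ht.2 hr
      exact show IsPure (lam x a') ∧ IsPure u from ⟨ha', ht.2⟩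
    | BGc hx => exact ht.1
  | appL _ ih => exact ⟨ih ht.1, ht.2⟩
  | appR _ ih => exact ⟨ht.1, ih ht.2⟩
  | lam _ ih => exact ih ht
  | esubL _ _ => exact ht.elim
  | esubR _ _ => exact ht.elim

lemma fv_parlm (t : Tm) : fv (parlm t) = fv t := by
  induction t using parlm.induct <;> simp_all [parlm, fv]

lemma app_parlm {a : Tm} (s : Tm) (ha : IsPure a) :
    ReflTransGen BStep (app (parlm a) (parlm s)) (parlm (app a s)) := by
  cases a with
  | var x => simp only [parlm]; exact ReflTransGen.refl
  | app p q => simp only [parlm]; exact ReflTransGen.refl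
  | lam x v =>
    simp only [parlm]
    exact ReflTransGen.single (Ctx.root BRoot.B)
  | esub x p q => exact ha.elim

lemma pure_to_parlm : ∀ {t : Tm}, IsPure t → ReflTransGen BStep t (parlm t) := by
  intro t
  induction t with
  | var x => intro _; simp only [parlm]; exact ReflTransGen.refl
  | lam x v ih =>
    intro ht
    have h1 : ReflTransGen BStep _ _ := ReflTransGen.lift (fun z => lam x z) (fun _ _ h => Ctx.lam h) _ _ (ih ht)
    simpa only [parlm] using h1
  | app a s iha ihs =>
    intro ht
    have h1 : ReflTransGen BStep (app a s) (app (parlm a) (parlm s)) :=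
      (ReflTransGen.lift (fun z => app z s) (fun _ _ h => Ctx.appL h) _ _ (iha ht.1)).trans
        (ReflTransGen.lift (fun z => app (parlm a) z) (fun _ _ h => Ctx.appR h) _ _ (ihs ht.2))
    exact h1.trans (app_parlm s ht.1)
  | esub x p q _ _ => intro ht; exact ht.elim

lemma bstep_lam_inv {y : ℕ} {c d : Tm} (h : BStep (lam y c) d) :
    ∃ c', d = lam y c' ∧ BStep c c' := by
  cases h with
  | root r => cases r
  | lam h' => exact ⟨_, rfl, h'⟩

lemma rtg_lam_inv {y : ℕ} {c d : Tm} (h : ReflTransGen BStep (lam y c) d) :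
    ∃ c', d = lam y c' ∧ ReflTransGen BStep c c' := by
  induction h with
  | refl => exact ⟨c, rfl, ReflTransGen.refl⟩
  | tail _ hstep ih =>
    obtain ⟨c', rfl, hc⟩ := ih
    obtain ⟨c'', rfl, h2⟩ := bstep_lam_inv hstep
    exact ⟨c'', rfl, hc.tail h2⟩

lemma parlm_repl : ∀ {t : Tm} {t' : Tm} {x : ℕ} {u : Tm}, IsPure t → IsPure u →
    Repl x u t t' →
    ∃ w, Repl x (parlm u) (parlm t) w ∧ ReflTransGen BStep w (parlm t') := by
  intro t
  induction t with
  | var y =>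
    intro t' x u ht hu h
    cases h
    exact ⟨_, by simpa only [parlm] using Repl.var, ReflTransGen.refl⟩
  | lam y v ihv =>
    intro t' x u ht hu h
    cases h with
    | lam hy hyu hv =>
      obtain ⟨w, hw1, hw2⟩ := ihv ht hu hv
      have h1 : Repl x (parlm u) (parlm (lam y v)) (lam y w) := by
        simpa only [parlm] using Repl.lam hy (by rwa [fv_parlm]) hw1
      have h2 : ReflTransGen BStep _ _ := ReflTransGen.lift (fun z => lam y z) (fun _ _ h => Ctx.lam h) _ _ hw2
      exact ⟨lam y w, h1, by simpa only [parlm] using h2⟩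
  | esub y p q _ _ => intro t' x u ht hu h; exact ht.elim
  | app a s iha ihs =>
    intro t' x u ht hu h
    cases h with
    | appL ha =>
      rename_i a'
      cases a with
      | var y =>
        cases ha
        have h1 : Repl x (parlm u) (parlm (app (var x) s)) (app (parlm u) (parlm s)) := by
          simpa only [parlm] using Repl.appL Repl.var
        exact ⟨app (parlm u) (parlm s), h1, app_parlm s hu⟩
      | lam y v =>
        obtain ⟨w, hw1, hw2⟩ := iha (show IsPure v from ht.1) hu ha
        rw [show parlm (lam y v) = lam y (parlm v) from rfl] at hw1
        cases hw1 with
        | lam hy' hyu' hv' =>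
          rename_i w0
          obtain ⟨w1, heq, hw3⟩ := rtg_lam_inv hw2
          -- determine the shape of a'
          cases ha with
          | lam hy hyu hv =>
            rename_i v'
            rw [show parlm (lam y v') = lam y (parlm v') from rfl] at heq
            injection heq with _ heq2
            subst heq2
            have h1 : Repl x (parlm u) (parlm (app (lam y v) s)) (esub y w0 (parlm s)) := by
              simpa only [parlm] using Repl.esubL hy' hyu' hv'
            have h2 : ReflTransGen BStep _ _ := ReflTransGen.lift (fun z => esub y z (parlm s))
              (fun _ _ h => Ctx.esubL h) _ _ hw3
            exact ⟨esub y w0 (parlm s), h1, by simpa only [parlm] using h2⟩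
      | app p q =>
        obtain ⟨w, hw1, hw2⟩ := iha ht.1 hu ha
        have hpa' : IsPure a' := pure_repl ht.1 hu ha
        have h1 : Repl x (parlm u) (parlm (app (app p q) s)) (app w (parlm s)) := by
          simpa only [parlm] using Repl.appL hw1
        have h2 : ReflTransGen BStep (app w (parlm s)) (app (parlm a') (parlm s)) :=
          ReflTransGen.lift (fun z => app z (parlm s)) (fun _ _ h => Ctx.appL h) _ _ hw2
        exact ⟨app w (parlm s), h1, h2.trans (app_parlm s hpa')⟩
      | esub y p q => exact ht.1.elim
    | appR hs =>
      rename_i s'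
      obtain ⟨w, hw1, hw2⟩ := ihs ht.2 hu hs
      cases a with
      | var y =>
        have h1 : Repl x (parlm u) (parlm (app (var y) s)) (app (var y) w) := by
          simpa only [parlm] using Repl.appR hw1
        have h2 : ReflTransGen BStep _ _ := ReflTransGen.lift (fun z => app (var y) z) (fun _ _ h => Ctx.appR h) _ _ hw2
        exact ⟨app (var y) w, h1, by simpa only [parlm] using h2⟩
      | app p q =>
        have h1 : Repl x (parlm u) (parlm (app (app p q) s)) (app (parlm (app p q)) w) := by
          simpa only [parlm] using Repl.appR hw1
        have h2 : ReflTransGen BStep _ _ := ReflTransGen.lift (fun z => app (parlm (app p q)) z)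
          (fun _ _ h => Ctx.appR h) _ _ hw2
        exact ⟨app (parlm (app p q)) w, h1, by simpa only [parlm] using h2⟩
      | lam y v =>
        have h1 : Repl x (parlm u) (parlm (app (lam y v) s)) (esub y (parlm v) w) := by
          simpa only [parlm] using Repl.esubR hw1
        have h2 : ReflTransGen BStep _ _ := ReflTransGen.lift (fun z => esub y (parlm v) z)
          (fun _ _ h => Ctx.esubR h) _ _ hw2
        exact ⟨esub y (parlm v) w, h1, by simpa only [parlm] using h2⟩
      | esub y p q => exact ht.1.elim

end Tm

namespace Tm

open Relation

lemma rtg_b_lsub {a b : Tm} (h : ReflTransGen BStep a b) : ReflTransGen LsubStep a b :=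
  ReflTransGen.lift id (fun _ _ h' => bstep_lsub h') _ _ h

lemma lsub_lam_inv {y : ℕ} {c d : Tm} (h : LsubStep (lam y c) d) :
    ∃ c', d = lam y c' ∧ LsubStep c c' := by
  cases h with
  | root r => cases r
  | lam h' => exact ⟨_, rfl, h'⟩

lemma tg_lam_inv {y : ℕ} {c d : Tm} (h : TransGen LsubStep (lam y c) d) :
    ∃ c', d = lam y c' ∧ TransGen LsubStep c c' := by
  induction h with
  | single h' =>
    obtain ⟨c', rfl, h2⟩ := lsub_lam_inv h'
    exact ⟨c', rfl, TransGen.single h2⟩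
  | tail _ hstep ih =>
    obtain ⟨c', rfl, hc⟩ := ih
    obtain ⟨c'', rfl, h2⟩ := lsub_lam_inv hstep
    exact ⟨c'', rfl, hc.tail h2⟩

lemma parlm_sim : ∀ {t t' : Tm}, IsPure t → LparStep t t' →
    TransGen LsubStep (parlm t) (parlm t') := by
  intro t
  induction t with
  | var y => intro t' ht h; cases h with | root r => cases r
  | lam y v ihv =>
    intro t' ht h
    cases h with
    | root r => cases r
    | lam hv =>
      have h1 : TransGen LsubStep _ _ := TransGen.lift (fun z => lam y z) (fun _ _ h => Ctx.lam h) _ _ (ihv ht hv)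
      simpa only [parlm] using h1
  | esub y p q _ _ => intro t' ht h; exact ht.elim
  | app a s iha ihs =>
    intro t' ht h
    cases a with
    | var y =>
      cases h with
      | root r => cases r
      | appL ha => cases ha with | root r => cases r
      | appR hs' =>
        have h1 : TransGen LsubStep _ _ := TransGen.lift (fun z => app (var y) z) (fun _ _ h => Ctx.appR h)
          _ _ (ihs ht.2 hs')
        simpa only [parlm] using h1
    | esub y p q => exact ht.1.elim
    | app p q =>
      cases h with
      | root r => cases r
      | appL ha =>
        rename_i a'
        have h1 : TransGen LsubStep _ _ := TransGen.lift (fun z => app z (parlm s))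
          (fun _ _ h => Ctx.appL h) _ _ (iha ht.1 ha)
        have h2 : ReflTransGen LsubStep (app (parlm a') (parlm s)) (parlm (app a' s)) :=
          rtg_b_lsub (app_parlm s (pure_lpar ht.1 ha))
        have h3 := TransGen.trans_left h1 h2
        simpa only [parlm] using h3
      | appR hs' =>
        have h1 : TransGen LsubStep _ _ := TransGen.lift (fun z => app (parlm (app p q)) z)
          (fun _ _ h => Ctx.appR h) _ _ (ihs ht.2 hs')
        simpa only [parlm] using h1
    | lam y v =>
      cases h with
      | root r =>
        cases r with
        | betaP hr =>
          rename_i v'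
          obtain ⟨w, hw1, hw2⟩ := parlm_repl (show IsPure v from ht.1) ht.2 hr
          have h1 : LsubStep (esub y (parlm v) (parlm s)) (esub y w (parlm s)) :=
            Ctx.root (LsubRoot.R hw1)
          have h2 : ReflTransGen LsubStep (esub y w (parlm s))
              (esub y (parlm v') (parlm s)) :=
            ReflTransGen.lift (fun z => esub y z (parlm s))
              (fun _ _ h => Ctx.esubL (bstep_lsub h)) _ _ hw2
          have h3 := TransGen.head' h1 h2
          simpa only [parlm] using h3
        | BGc hx =>
          simp only [parlm]
          exact TransGen.single (Ctx.root (LsubRoot.Gc (by rwa [fv_parlm])))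
      | appL ha =>
        have h0 := iha (show IsPure v from ht.1) ha
        cases ha with
        | root r => cases r
        | lam hv =>
          rename_i v'
          rw [show parlm (lam y v) = lam y (parlm v) from rfl,
            show parlm (lam y v') = lam y (parlm v') from rfl] at h0
          obtain ⟨c', heq, h1⟩ := tg_lam_inv h0
          injection heq with _ heq2
          subst heq2
          have h2 : TransGen LsubStep _ _ := TransGen.lift (fun z => esub y z (parlm s))
            (fun _ _ h => Ctx.esubL h) _ _ h1
          simpa only [parlm] using h2
      | appR hs' =>
        have h1 : TransGen LsubStep _ _ := TransGen.lift (fun z => esub y (parlm v) z)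
          (fun _ _ h => Ctx.esubR h) _ _ (ihs ht.2 hs')
        simpa only [parlm] using h1

lemma acc_of_rtg {R : Tm → Tm → Prop} {a b : Tm} (h : Acc (fun x y => R y x) a)
    (hab : ReflTransGen R a b) : Acc (fun x y => R y x) b := by
  induction hab with
  | refl => exact h
  | tail _ hs ih => exact Acc.inv ih hs

lemma sn_lsub_aux : ∀ u : Tm, Acc (fun a b => LparStep b a) u →
    ∀ n t, appCount t = n → unf t = u → Acc (fun a b : Tm => LsubStep b a) t := by
  intro u hu
  induction hu with
  | intro u _ ih =>
    intro n
    induction n using Nat.strong_induction_on with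
    | _ n ihn =>
      intro t hn hu'
      constructor
      intro b hb
      rcases lsub_cases hb with hB | hS
      · exact ihn (appCount b) (hn ▸ bstep_appCount hB) b rfl
          ((unf_bstep hB).symm.trans hu')
      · exact ih (unf b) (hu' ▸ unf_substep hS) (appCount b) b rfl rfl

lemma sn_lpar_aux : ∀ u : Tm, Acc (fun a b : Tm => TransGen LsubStep b a) u →
    ∀ t, IsPure t → parlm t = u → Acc (fun a b : Tm => LparStep b a) t := by
  intro u hu
  induction hu with
  | intro u _ ih =>
    intro t ht hpt
    constructor
    intro b hb
    exact ih (parlm b) (hpt ▸ parlm_sim ht hb) b (pure_lpar ht hb) rfl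

end Tm

namespace Tm

lemma acc_transGen {α} {r : α → α → Prop} {a : α} (h : Acc r a) :
    Acc (Relation.TransGen r) a := by
  induction h with
  | intro x _ ih =>
    constructor
    intro y hy
    cases hy with
    | single h' => exact ih _ h'
    | tail htg hr => exact Acc.inv (ih _ hr) htg

end Tm

/-- for pure λ-terms, λpar-strong normalisation and λsub-strong
normalisation coincide -/
theorem sn_lpar_iff_sn_lsub (t : Tm) (hpure : Tm.IsPure t) :
    Tm.SN Tm.LparStep t ↔ Tm.SN Tm.LsubStep t := by
  constructor
  · intro h
    exact Tm.sn_lsub_aux t h (Tm.appCount t) t rfl (Tm.unf_pure hpure)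
  · intro h
    have h1 : Acc (fun a b : Tm => Tm.LsubStep b a) (Tm.parlm t) :=
      Tm.acc_of_rtg h (Tm.rtg_b_lsub (Tm.pure_to_parlm hpure))
    have h2 : Acc (fun a b : Tm => Relation.TransGen Tm.LsubStep b a) (Tm.parlm t) :=
      Subrelation.accessible (fun {x y} hxy => Relation.TransGen.swap _ _ hxy)
        (Tm.acc_transGen h1)
    exact Tm.sn_lpar_aux (Tm.parlm t) h2 t hpure rfl
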